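/- With Z defined as a function of the message vectors q_{j→g} ∈ ℝ^K as follows: M_g(a) = Σ_{(t_j)_{j∈g∖{i}}∈{1,…,K}^{g∖{i}}} ((1/N)·Σ_{{r,s}⊆g, r≠s} c_{t_r t_s}) · ∏_{j∈g∖{i}} q_{j→g}(t_j) (with t_i = a) and Z = Σ_{a=1}^K n_a ∏_{g∈𝒢} M_g(a), fix f ∈ 𝒢, j ∈ f∖{i} and b ∈ {1,…,K}. Then the partial derivative of Z with respect to the coordinate q_{j→f}(b), evaluated at the point where every message q_{j'→g} equals n, is (c/N) · ( ∏_{g∈𝒢, g≠f} c·|g|·(|g|−1)/(2N) ) · [ 1 + (|f|−2)·( 2 + (|f|−3)/2 ) ]. -/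

import Mathlib

open Finset

/-- The quantity `M_g(a) = Σ_{(t_j)_{j∈g∖{i}}} ((1/N)·Σ_{{r,s}⊆g, r≠s} c_{t_r t_s}) ·
∏_{j∈g∖{i}} q_{j→g}(t_j)`, with `t_i = a`. -/
noncomputable def Mmsg {K : ℕ} {ι : Type*} [LinearOrder ι] (N : ℝ) (c : Fin K → Fin K → ℝ)
    (i : ι) (q : Finset ι → ι → Fin K → ℝ) (g : Finset ι) (a : Fin K) : ℝ :=
  ∑ t : {x // x ∈ g.erase i} → Fin K,
    ((1 / N) * ∑ rs ∈ (g ×ˢ g).filter fun rs => rs.1 < rs.2,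
        c (if h : rs.1 ∈ g.erase i then t ⟨rs.1, h⟩ else a)
          (if h : rs.2 ∈ g.erase i then t ⟨rs.2, h⟩ else a))
      * ∏ j : {x // x ∈ g.erase i}, q g j.1 (t j)

/-- `Z = Σ_a n_a ∏_{g∈𝒢} M_g(a)` as a function of the messages. -/
noncomputable def Zfun {K : ℕ} {ι : Type*} [LinearOrder ι] (N : ℝ) (c : Fin K → Fin K → ℝ)
    (n : Fin K → ℝ) (i : ι) (𝒢 : Finset (Finset ι))
    (q : Finset ι → ι → Fin K → ℝ) : ℝ :=
  ∑ a, n a * ∏ g ∈ 𝒢, Mmsg N c i q g a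

lemma collapse {K : ℕ} {α : Type*} [Fintype α] [DecidableEq α] (f : α → Fin K → ℝ) :
    ∑ t : α → Fin K, ∏ j, f j (t j) = ∏ j, ∑ x, f j x :=
  (Fintype.prod_sum f).symm

lemma prod_two {α : Type*} [Fintype α] [DecidableEq α] {r s : α} (hrs : r ≠ s) (A B : ℝ) :
    (∏ j : α, (if j = r then A else if j = s then B else 1)) = A * B := by
  rw [← Finset.mul_prod_erase Finset.univ _ (Finset.mem_univ r), if_pos rfl]
  congr 1
  rw [show (∏ j ∈ Finset.univ.erase r, (if j = r then A else if j = s then B else 1))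
      = ∏ j ∈ Finset.univ.erase r, (if j = s then B else 1) from
    Finset.prod_congr rfl fun j hj => by simp [(Finset.mem_erase.mp hj).1]]
  rw [Finset.prod_ite_eq' (Finset.univ.erase r) s fun _ => B]
  simp [Finset.mem_erase, hrs.symm]

lemma marg2 {K : ℕ} {α : Type*} [Fintype α] [DecidableEq α] (q : α → Fin K → ℝ)
    (hq : ∀ j, ∑ x, q j x = 1) (F : Fin K → Fin K → ℝ) {r s : α} (hrs : r ≠ s) :
    ∑ t : α → Fin K, F (t r) (t s) * ∏ j, q j (t j)
      = ∑ a, ∑ b, F a b * q r a * q s b := by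
  classical
  set G : Fin K → Fin K → α → Fin K → ℝ := fun a b j x =>
    if j = r then (if x = a then q j x else 0)
    else if j = s then (if x = b then q j x else 0) else q j x with hG
  have key : ∀ t : α → Fin K, F (t r) (t s) * ∏ j, q j (t j)
      = ∑ a, ∑ b, F a b * ∏ j, G a b j (t j) := by
    intro t
    have hprod : ∀ a b, (∏ j, G a b j (t j))
        = if t r = a ∧ t s = b then ∏ j, q j (t j) else 0 := by
      intro a b
      split_ifs with h
      · exact Finset.prod_congr rfl fun j _ => by
          by_cases hjr : j = r
          · subst hjr; simp [hG, h.1]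
          · by_cases hjs : j = s
            · subst hjs; simp [hG, hjr, h.2]
            · simp [hG, hjr, hjs]
      · push_neg at h
        by_cases h1 : t r = a
        · refine Finset.prod_eq_zero (Finset.mem_univ s) ?_
          simp [hG, hrs.symm, h h1]
        · refine Finset.prod_eq_zero (Finset.mem_univ r) ?_
          simp [hG, h1]
    simp only [hprod, mul_ite, mul_zero, ite_and]
    simp [Finset.sum_ite_eq]
  rw [Finset.sum_congr rfl fun t _ => key t, Finset.sum_comm]
  refine Finset.sum_congr rfl fun a _ => ?_
  rw [Finset.sum_comm]
  refine Finset.sum_congr rfl fun b _ => ?_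
  rw [← Finset.mul_sum, collapse]
  have : (∏ j, ∑ x, G a b j x) = ∏ j : α, (if j = r then q r a else if j = s then q s b else 1) := by
    refine Finset.prod_congr rfl fun j _ => ?_
    by_cases hjr : j = r
    · subst hjr; simp [hG]
    · by_cases hjs : j = s
      · subst hjs; simp [hG, hjr]
      · simp [hG, hjr, hjs, hq j]
  rw [this, prod_two hrs, mul_assoc]

lemma marg1 {K : ℕ} {α : Type*} [Fintype α] [DecidableEq α] (q : α → Fin K → ℝ)
    (hq : ∀ j, ∑ x, q j x = 1) (F : Fin K → ℝ) (r : α) :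
    ∑ t : α → Fin K, F (t r) * ∏ j, q j (t j) = ∑ a, F a * q r a := by
  classical
  set G : Fin K → α → Fin K → ℝ := fun a j x =>
    if j = r then (if x = a then q j x else 0) else q j x with hG
  have key : ∀ t : α → Fin K, F (t r) * ∏ j, q j (t j)
      = ∑ a, F a * ∏ j, G a j (t j) := by
    intro t
    have hprod : ∀ a, (∏ j, G a j (t j)) = if t r = a then ∏ j, q j (t j) else 0 := by
      intro a
      split_ifs with h
      · exact Finset.prod_congr rfl fun j _ => by
          by_cases hjr : j = r
          · subst hjr; simp [hG, h]
          · simp [hG, hjr]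
      · exact Finset.prod_eq_zero (Finset.mem_univ r) (by simp [hG, h])
    simp [hprod, mul_ite, mul_zero]
  rw [Finset.sum_congr rfl fun t _ => key t, Finset.sum_comm]
  refine Finset.sum_congr rfl fun a _ => ?_
  rw [← Finset.mul_sum, collapse]
  have : (∏ j, ∑ x, G a j x) = ∏ j : α, (if j = r then q r a else 1) := by
    refine Finset.prod_congr rfl fun j _ => ?_
    by_cases hjr : j = r
    · subst hjr; simp [hG]
    · simp [hG, hjr, hq j]
  rw [this, Finset.prod_ite_eq' Finset.univ r fun _ => q r a]
  simp

lemma Mmsg_eval {K : ℕ} {ι : Type*} [LinearOrder ι] (N : ℝ) (c : Fin K → Fin K → ℝ)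
    (i : ι) (g : Finset ι) (a : Fin K)
    (q : ι → Fin K → ℝ) (hq : ∀ j', ∑ x, q j' x = 1) (Q : Finset ι → ι → Fin K → ℝ)
    (hQ : ∀ j' b', Q g j' b' = q j' b') :
    Mmsg N c i Q g a = (1/N) * ∑ rs ∈ (g ×ˢ g).filter fun rs => rs.1 < rs.2,
      ∑ a', ∑ b', c a' b'
        * (if rs.1 = i then (if a' = a then 1 else 0) else q rs.1 a')
        * (if rs.2 = i then (if b' = a then 1 else 0) else q rs.2 b') := by
  classical
  unfold Mmsg
  simp only [hQ, mul_assoc]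
  rw [← Finset.mul_sum]
  congr 1
  simp only [Finset.sum_mul]
  rw [Finset.sum_comm]
  refine Finset.sum_congr rfl fun p hp => ?_
  rw [Finset.mem_filter, Finset.mem_product] at hp
  obtain ⟨⟨h1, h2⟩, hlt⟩ := hp
  have hne : p.1 ≠ p.2 := ne_of_lt hlt
  by_cases e1 : p.1 = i
  · have e2 : p.2 ≠ i := fun h => hne (e1.trans h.symm)
    have hm2 : p.2 ∈ g.erase i := Finset.mem_erase.mpr ⟨e2, h2⟩
    have hm1 : p.1 ∉ g.erase i := by simp [e1]
    simp only [dif_neg hm1, dif_pos hm2]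
    rw [marg1 (fun j : {x // x ∈ g.erase i} => q j.1) (fun j => hq j.1)
      (fun x => c a x) ⟨p.2, hm2⟩]
    simp [e1, e2, mul_ite, ite_mul, mul_zero, zero_mul, mul_one, one_mul,
      Finset.sum_ite_eq', Finset.sum_ite_eq]
  · by_cases e2 : p.2 = i
    · have hm1 : p.1 ∈ g.erase i := Finset.mem_erase.mpr ⟨e1, h1⟩
      have hm2 : p.2 ∉ g.erase i := by simp [e2]
      simp only [dif_pos hm1, dif_neg hm2]
      rw [marg1 (fun j : {x // x ∈ g.erase i} => q j.1) (fun j => hq j.1)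
        (fun x => c x a) ⟨p.1, hm1⟩]
      simp [e1, e2, mul_ite, ite_mul, mul_zero, zero_mul, mul_one, one_mul,
        Finset.sum_ite_eq', Finset.sum_ite_eq]
    · have hm1 : p.1 ∈ g.erase i := Finset.mem_erase.mpr ⟨e1, h1⟩
      have hm2 : p.2 ∈ g.erase i := Finset.mem_erase.mpr ⟨e2, h2⟩
      simp only [dif_pos hm1, dif_pos hm2]
      have hrs : (⟨p.1, hm1⟩ : {x // x ∈ g.erase i}) ≠ ⟨p.2, hm2⟩ := by
        simp only [ne_eq, Subtype.mk.injEq]; exact hne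
      rw [marg2 (fun j : {x // x ∈ g.erase i} => q j.1) (fun j => hq j.1) c hrs]
      simp [e1, e2, mul_assoc]

lemma card_pairs {ι : Type*} [LinearOrder ι] (g : Finset ι) :
    2 * (((g ×ˢ g).filter fun rs => rs.1 < rs.2).card) = g.card * g.card - g.card := by
  classical
  have hA : g.offDiag.filter (fun rs => rs.1 < rs.2) = (g ×ˢ g).filter fun rs => rs.1 < rs.2 := by
    ext p
    simp only [Finset.mem_filter, Finset.mem_offDiag, Finset.mem_product]
    constructor
    · rintro ⟨⟨a, b, _⟩, h⟩; exact ⟨⟨a, b⟩, h⟩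
    · rintro ⟨⟨a, b⟩, h⟩; exact ⟨⟨a, b, ne_of_lt h⟩, h⟩
  have hB : g.offDiag.filter (fun rs => ¬ rs.1 < rs.2)
      = (g ×ˢ g).filter fun rs => rs.2 < rs.1 := by
    ext p
    simp only [Finset.mem_filter, Finset.mem_offDiag, Finset.mem_product]
    constructor
    · rintro ⟨⟨a, b, hne⟩, h⟩; exact ⟨⟨a, b⟩, (not_lt.mp h).lt_of_ne hne.symm⟩
    · rintro ⟨⟨a, b⟩, h⟩; exact ⟨⟨a, b, h.ne'⟩, not_lt.mpr h.le⟩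
  have hcard : ((g ×ˢ g).filter fun rs => rs.1 < rs.2).card
      = ((g ×ˢ g).filter fun rs => rs.2 < rs.1).card := by
    refine Finset.card_bij' (fun p _ => p.swap) (fun p _ => p.swap) ?_ ?_ ?_ ?_ <;>
      simp [Finset.mem_filter, Finset.mem_product, and_comm]
  have key := Finset.card_filter_add_card_filter_not
    (s := g.offDiag) (p := fun rs => rs.1 < rs.2)
  rw [hA, hB, ← hcard] at key
  rw [two_mul, key, Finset.offDiag_card]

lemma card_pairs_real {ι : Type*} [LinearOrder ι] (g : Finset ι) :
    ((((g ×ˢ g).filter fun rs => rs.1 < rs.2).card : ℝ))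
      = (g.card : ℝ) * ((g.card : ℝ) - 1) / 2 := by
  have h := card_pairs g
  rcases Nat.eq_zero_or_pos g.card with h0 | h0
  · have hg : g = ∅ := Finset.card_eq_zero.mp h0
    subst hg
    simp
  · have hle : g.card ≤ g.card * g.card := Nat.le_mul_of_pos_left _ h0
    zify [hle] at h
    have h' : (2 : ℝ) * (((g ×ˢ g).filter fun rs => rs.1 < rs.2).card : ℝ)
        = (g.card : ℝ) * (g.card : ℝ) - (g.card : ℝ) := by exact_mod_cast h
    linarith

section
variable {K : ℕ} {c : Fin K → Fin K → ℝ} {n : Fin K → ℝ} {cbar : ℝ}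

lemma pairSum_right (hdeg : ∀ a, ∑ b, c a b * n b = cbar) (u : Fin K → ℝ)
    (hu : ∑ x, u x = 1) :
    ∑ a', ∑ b', c a' b' * u a' * n b' = cbar := by
  have h : ∀ a', ∑ b', c a' b' * u a' * n b' = u a' * cbar := by
    intro a'
    rw [← hdeg a', Finset.mul_sum]
    exact Finset.sum_congr rfl fun b' _ => by ring
  rw [Finset.sum_congr rfl fun a' _ => h a', ← Finset.sum_mul, hu, one_mul]

lemma pairSum_left (hcsym : ∀ a b, c a b = c b a) (hdeg : ∀ a, ∑ b, c a b * n b = cbar)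
    (v : Fin K → ℝ) (hv : ∑ x, v x = 1) :
    ∑ a', ∑ b', c a' b' * n a' * v b' = cbar := by
  rw [Finset.sum_comm]
  have h : ∀ b', ∑ a', c a' b' * n a' * v b' = ∑ a', c b' a' * v b' * n a' :=
    fun b' => Finset.sum_congr rfl fun a' _ => by rw [hcsym a' b']; ring
  rw [Finset.sum_congr rfl fun b' _ => h b']
  exact pairSum_right hdeg v hv

lemma pairSum_cbar (hcsym : ∀ a b, c a b = c b a) (hdeg : ∀ a, ∑ b, c a b * n b = cbar)
    (u v : Fin K → ℝ) (hu : ∑ x, u x = 1) (hv : ∑ x, v x = 1) (h : u = n ∨ v = n) :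
    ∑ a', ∑ b', c a' b' * u a' * v b' = cbar := by
  rcases h with h | h
  · subst h; exact pairSum_left hcsym hdeg v hv
  · subst h; exact pairSum_right hdeg u hu

lemma Mmsg_fixed (hcsym : ∀ a b, c a b = c b a) (hn1 : ∑ a, n a = 1)
    (hdeg : ∀ a, ∑ b, c a b * n b = cbar)
    {ι : Type*} [LinearOrder ι] (N : ℝ) (hN : 0 < N) (i : ι) (g : Finset ι)
    (a : Fin K) (Q : Finset ι → ι → Fin K → ℝ) (hQ : ∀ j' b', Q g j' b' = n b') :
    Mmsg N c i Q g a = cbar * (g.card : ℝ) * ((g.card : ℝ) - 1) / (2 * N) := by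
  rw [Mmsg_eval N c i g a (fun _ => n) (fun _ => hn1) Q hQ]
  rw [Finset.sum_congr rfl (fun p hp => show _ = cbar from ?_)]
  · rw [Finset.sum_const, nsmul_eq_mul, card_pairs_real]
    field_simp
  · rw [Finset.mem_filter] at hp
    have hne : p.1 ≠ p.2 := ne_of_lt hp.2
    by_cases e1 : p.1 = i <;> by_cases e2 : p.2 = i
    · exact absurd (e1.trans e2.symm) hne
    · simp only [if_pos e1, if_neg e2]
      exact pairSum_right hdeg _ (by simp)
    · simp only [if_neg e1, if_pos e2]
      exact pairSum_left hcsym hdeg _ (by simp)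
    · simp only [if_neg e1, if_neg e2]
      exact pairSum_right hdeg _ hn1

lemma Mmsg_delta (hcsym : ∀ a b, c a b = c b a) (hn1 : ∑ a, n a = 1)
    (hdeg : ∀ a, ∑ b, c a b * n b = cbar)
    {ι : Type*} [LinearOrder ι] (N : ℝ) (i : ι) (f : Finset ι)
    (hi : i ∈ f) (j : ι) (hj : j ∈ f.erase i) (a b : Fin K)
    (Q : Finset ι → ι → Fin K → ℝ)
    (hQ : ∀ j' b', Q f j' b' = if j' = j then (if b' = b then (1:ℝ) else 0) else n b') :
    Mmsg N c i Q f a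
      = (1/N) * (((((f ×ˢ f).filter fun rs => rs.1 < rs.2).card : ℝ) - 1) * cbar + c a b) := by
  obtain ⟨hji, hjf⟩ := Finset.mem_erase.mp hj
  rw [Mmsg_eval N c i f a (fun j' b' => if j' = j then (if b' = b then (1:ℝ) else 0) else n b')
    (fun j' => by by_cases h : j' = j <;> simp [h, hn1]) Q hQ]
  congr 1
  have gen : ∀ p ∈ (f ×ˢ f).filter (fun rs => rs.1 < rs.2),
      ¬(p.1 = i ∧ p.2 = j) → ¬(p.1 = j ∧ p.2 = i) →
      (∑ a', ∑ b', c a' b'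
        * (if p.1 = i then (if a' = a then (1:ℝ) else 0)
            else if p.1 = j then (if a' = b then 1 else 0) else n a')
        * (if p.2 = i then (if b' = a then (1:ℝ) else 0)
            else if p.2 = j then (if b' = b then 1 else 0) else n b')) = cbar := by
    intro p hp hx1 hx2
    rw [Finset.mem_filter] at hp
    have hne : p.1 ≠ p.2 := ne_of_lt hp.2
    by_cases e1 : p.1 = i
    · have f2i : p.2 ≠ i := fun h => hne (e1.trans h.symm)
      have f2j : p.2 ≠ j := fun h => hx1 ⟨e1, h⟩
      simp only [if_pos e1, if_neg f2i, if_neg f2j]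
      exact pairSum_cbar hcsym hdeg _ _ (by simp) hn1 (Or.inr rfl)
    · by_cases e1' : p.1 = j
      · have f2i : p.2 ≠ i := fun h => hx2 ⟨e1', h⟩
        have f2j : p.2 ≠ j := fun h => hne (e1'.trans h.symm)
        simp only [if_neg e1, if_pos e1', if_neg f2i, if_neg f2j]
        exact pairSum_cbar hcsym hdeg _ _ (by simp) hn1 (Or.inr rfl)
      · simp only [if_neg e1, if_neg e1']
        by_cases e2 : p.2 = i
        · simp only [if_pos e2]
          exact pairSum_cbar hcsym hdeg _ _ hn1 (by simp) (Or.inl rfl)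
        · by_cases e2' : p.2 = j
          · simp only [if_neg e2, if_pos e2']
            exact pairSum_cbar hcsym hdeg _ _ hn1 (by simp) (Or.inl rfl)
          · simp only [if_neg e2, if_neg e2']
            exact pairSum_cbar hcsym hdeg _ _ hn1 hn1 (Or.inl rfl)
  rcases lt_or_gt_of_ne (Ne.symm hji) with hij | hij
  · have hp0 : (i, j) ∈ (f ×ˢ f).filter (fun rs => rs.1 < rs.2) := by
      simp [Finset.mem_filter, Finset.mem_product, hi, hjf, hij]
    rw [← Finset.add_sum_erase _ _ hp0]
    have hval : (∑ a', ∑ b', c a' b'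
        * (if (i,j).1 = i then (if a' = a then (1:ℝ) else 0)
            else if (i,j).1 = j then (if a' = b then 1 else 0) else n a')
        * (if (i,j).2 = i then (if b' = a then (1:ℝ) else 0)
            else if (i,j).2 = j then (if b' = b then 1 else 0) else n b')) = c a b := by
      simp [hji, mul_ite, ite_mul, mul_zero, zero_mul, mul_one, Finset.sum_ite_eq']
    rw [hval]
    rw [Finset.sum_congr rfl (fun p hp => gen p (Finset.mem_of_mem_erase hp)
      (fun hx => (Finset.mem_erase.mp hp).1 (by rw [← hx.1, ← hx.2]))
      (fun hx => absurd (Finset.mem_filter.mp (Finset.mem_of_mem_erase hp)).2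
        (by rw [hx.1, hx.2]; exact not_lt.mpr hij.le)))]
    rw [Finset.sum_const, nsmul_eq_mul, Finset.card_erase_of_mem hp0]
    have h1 : 1 ≤ ((f ×ˢ f).filter fun rs => rs.1 < rs.2).card :=
      Finset.card_pos.mpr ⟨_, hp0⟩
    rw [Nat.cast_sub h1]
    push_cast
    ring
  · have hp0 : (j, i) ∈ (f ×ˢ f).filter (fun rs => rs.1 < rs.2) := by
      simp [Finset.mem_filter, Finset.mem_product, hi, hjf, hij]
    rw [← Finset.add_sum_erase _ _ hp0]
    have hval : (∑ a', ∑ b', c a' b'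
        * (if (j,i).1 = i then (if a' = a then (1:ℝ) else 0)
            else if (j,i).1 = j then (if a' = b then 1 else 0) else n a')
        * (if (j,i).2 = i then (if b' = a then (1:ℝ) else 0)
            else if (j,i).2 = j then (if b' = b then 1 else 0) else n b')) = c a b := by
      simp only [if_neg hji]
      simp [mul_ite, ite_mul, mul_zero, zero_mul, mul_one, Finset.sum_ite_eq']
      exact hcsym b a
    rw [hval]
    rw [Finset.sum_congr rfl (fun p hp => gen p (Finset.mem_of_mem_erase hp)
      (fun hx => absurd (Finset.mem_filter.mp (Finset.mem_of_mem_erase hp)).2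
        (by rw [hx.1, hx.2]; exact not_lt.mpr hij.le))
      (fun hx => (Finset.mem_erase.mp hp).1 (by rw [← hx.1, ← hx.2])))]
    rw [Finset.sum_const, nsmul_eq_mul, Finset.card_erase_of_mem hp0]
    have h1 : 1 ≤ ((f ×ˢ f).filter fun rs => rs.1 < rs.2).card :=
      Finset.card_pos.mpr ⟨_, hp0⟩
    rw [Nat.cast_sub h1]
    push_cast
    ring
end

lemma Mf_affine {K : ℕ} {ι : Type*} [LinearOrder ι] (N : ℝ) (c : Fin K → Fin K → ℝ)
    (n : Fin K → ℝ) (i : ι) (f : Finset ι) (j : ι) (hj : j ∈ f.erase i) (b : Fin K)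
    (a : Fin K) (x : ℝ) (Q : Finset ι → ι → Fin K → ℝ)
    (hQ : ∀ j' b', Q f j' b' = if j' = j ∧ b' = b then x else n b') :
    Mmsg N c i Q f a
      = Mmsg N c i (fun _ _ b' => n b') f a
        + (x - n b) * Mmsg N c i
            (fun _ j' b' => if j' = j then (if b' = b then (1:ℝ) else 0) else n b') f a := by
  unfold Mmsg
  simp only [hQ]
  rw [Finset.mul_sum, ← Finset.sum_add_distrib]
  refine Finset.sum_congr rfl fun t _ => ?_
  set W := (1 / N) * ∑ rs ∈ (f ×ˢ f).filter fun rs => rs.1 < rs.2,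
      c (if h : rs.1 ∈ f.erase i then t ⟨rs.1, h⟩ else a)
        (if h : rs.2 ∈ f.erase i then t ⟨rs.2, h⟩ else a) with hW
  set jj : {x // x ∈ f.erase i} := ⟨j, hj⟩ with hjj
  have hP : (∏ j' : {x // x ∈ f.erase i}, if j'.1 = j ∧ t j' = b then x else n (t j'))
      = (∏ j' : {x // x ∈ f.erase i}, n (t j'))
        + (x - n b) * ∏ j' : {x // x ∈ f.erase i},
            (if j'.1 = j then (if t j' = b then (1:ℝ) else 0) else n (t j')) := by
    rw [← Finset.mul_prod_erase Finset.univ _ (Finset.mem_univ jj),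
        ← Finset.mul_prod_erase Finset.univ (fun j' => n (t j')) (Finset.mem_univ jj),
        ← Finset.mul_prod_erase Finset.univ _ (Finset.mem_univ jj)]
    have tail1 : (∏ j' ∈ Finset.univ.erase jj, if j'.1 = j ∧ t j' = b then x else n (t j'))
        = ∏ j' ∈ Finset.univ.erase jj, n (t j') := by
      refine Finset.prod_congr rfl fun j' hj' => ?_
      have : j'.1 ≠ j := fun h => (Finset.mem_erase.mp hj').1 (Subtype.ext h)
      simp [this]
    have tail2 : (∏ j' ∈ Finset.univ.erase jj,
          if j'.1 = j then (if t j' = b then (1:ℝ) else 0) else n (t j'))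
        = ∏ j' ∈ Finset.univ.erase jj, n (t j') := by
      refine Finset.prod_congr rfl fun j' hj' => ?_
      have : j'.1 ≠ j := fun h => (Finset.mem_erase.mp hj').1 (Subtype.ext h)
      simp [this]
    rw [tail1, tail2]
    have hjv : jj.1 = j := rfl
    by_cases hb : t jj = b <;> simp [hb, hjv] <;> ring
  rw [hP]
  ring


/-- The partial derivative of `Z` with respect to the coordinate `q_{j→f}(b)`,
evaluated at the point where every message equals `n`, is
`(c/N)·(∏_{g∈𝒢, g≠f} c·|g|·(|g|−1)/(2N))·[1 + (|f|−2)·(2 + (|f|−3)/2)]`,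
under the constant expected group degree assumption. -/
theorem deriv_normalizing_constant_at_fixed_point {K : ℕ} (hK : 1 ≤ K)
    (c : Fin K → Fin K → ℝ) (hcsym : ∀ a b, c a b = c b a) (hcnn : ∀ a b, 0 ≤ c a b)
    (n : Fin K → ℝ) (hn : ∀ a, 0 ≤ n a) (hn1 : ∑ a, n a = 1)
    (cbar : ℝ) (hcbar : 0 < cbar) (hdeg : ∀ a, ∑ b, c a b * n b = cbar)
    {ι : Type*} [LinearOrder ι] (N : ℝ) (hN : 0 < N)
    (i : ι) (𝒢 : Finset (Finset ι)) (h𝒢 : ∀ g ∈ 𝒢, i ∈ g ∧ 2 ≤ g.card)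
    (f : Finset ι) (hf : f ∈ 𝒢) (j : ι) (hj : j ∈ f.erase i) (b : Fin K) :
    deriv (fun x : ℝ =>
        Zfun N c n i 𝒢 (fun g j' b' => if g = f ∧ j' = j ∧ b' = b then x else n b')) (n b)
      = (cbar / N)
          * (∏ g ∈ 𝒢.erase f, cbar * (g.card : ℝ) * ((g.card : ℝ) - 1) / (2 * N))
          * (1 + ((f.card : ℝ) - 2) * (2 + ((f.card : ℝ) - 3) / 2)) := by
  classical
  set P : ℝ := ∏ g ∈ 𝒢.erase f, cbar * (g.card : ℝ) * ((g.card : ℝ) - 1) / (2 * N) with hPdef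
  set D : ℝ := cbar * (f.card : ℝ) * ((f.card : ℝ) - 1) / (2 * N) with hDdef
  set A : ℝ := (((f ×ˢ f).filter fun rs => rs.1 < rs.2).card : ℝ) with hAdef
  set E : Fin K → ℝ := fun a => (1/N) * ((A - 1) * cbar + c a b) with hEdef
  have hfun : (fun x : ℝ =>
        Zfun N c n i 𝒢 (fun g j' b' => if g = f ∧ j' = j ∧ b' = b then x else n b'))
      = fun x => (∑ a, n a * ((D - n b * E a) * P)) + x * (∑ a, n a * (E a * P)) := by
    funext x
    rw [Finset.mul_sum, ← Finset.sum_add_distrib]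
    unfold Zfun
    refine Finset.sum_congr rfl fun a _ => ?_
    have key : (∏ g ∈ 𝒢, Mmsg N c i
          (fun g j' b' => if g = f ∧ j' = j ∧ b' = b then x else n b') g a)
        = (D + (x - n b) * E a) * P := by
      rw [← Finset.mul_prod_erase 𝒢 _ hf]
      congr 1
      · rw [Mf_affine N c n i f j hj b a x _
          (fun j' b' => by by_cases h : j' = j ∧ b' = b <;> simp [h])]
        rw [Mmsg_fixed hcsym hn1 hdeg N hN i f a _ (fun _ _ => rfl)]
        rw [Mmsg_delta hcsym hn1 hdeg N i f ((h𝒢 f hf).1)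
          j hj a b _ (fun _ _ => rfl)]
      · refine Finset.prod_congr rfl fun g hg => ?_
        have hgf : g ≠ f := (Finset.mem_erase.mp hg).1
        exact Mmsg_fixed hcsym hn1 hdeg N hN i g a _ (fun j' b' => by simp [hgf])
    rw [key]
    ring
  rw [hfun]
  have hder : HasDerivAt (fun x : ℝ => (∑ a, n a * ((D - n b * E a) * P))
      + x * (∑ a, n a * (E a * P))) (∑ a, n a * (E a * P)) (n b) := by
    simpa using ((hasDerivAt_id (n b)).mul_const (∑ a, n a * (E a * P))).const_add
      (∑ a, n a * ((D - n b * E a) * P))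
  rw [hder.deriv]
  have hcb : ∑ a, n a * c a b = cbar := by
    rw [← hdeg b]
    exact Finset.sum_congr rfl fun a _ => by rw [hcsym a b]; ring
  have hsplit : ∑ a, n a * (E a * P)
      = ((1/N) * ((A - 1) * cbar) * P) * (∑ a, n a) + ((1/N) * P) * (∑ a, n a * c a b) := by
    rw [Finset.mul_sum, Finset.mul_sum, ← Finset.sum_add_distrib]
    refine Finset.sum_congr rfl fun a _ => ?_
    rw [hEdef]
    ring
  rw [hsplit, hn1, hcb, hAdef, card_pairs_real f]
  ring
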